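/- (Theorem 1, dispreferred sample.) Let E be a real Hilbert space, p_w, p_l : E → ℝ differentiable at θ with p_w(θ) > 0 and p_l(θ) > 0, β > 0, η > 0, r ∈ ℝ, σ(t) = 1/(1+exp(−t)), z = β(log p_w(θ) − log p_l(θ) − r), and L(θ') = −log σ(β(log p_w(θ') − log p_l(θ') − r)). Let Δθ = −η · grad L(θ). Then the first-order change of the dispreferred probability satisfies ⟪grad p_l(θ), Δθ⟫ = η β (1−σ(z)) · p_l(θ) · (⟪g_l, g_w⟫ − ‖g_l‖²), where g_w = grad(log∘p_w)(θ) and g_l = grad(log∘p_l)(θ). -/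

import Mathlib

open RealInnerProductSpace

/-- Theorem 1 (dispreferred sample): after one DPO gradient step `Δθ = -η • ∇L(θ)`,
the first-order change of the dispreferred probability equals
`η β (1-σ(z)) p_l(θ) (⟪g_l, g_w⟫ - ‖g_l‖²)`. -/
theorem dpo_dispreferred_probability_update
    {E : Type*} [NormedAddCommGroup E] [InnerProductSpace ℝ E] [CompleteSpace E]
    (p_w p_l : E → ℝ) (θ : E)
    (hw : DifferentiableAt ℝ p_w θ) (hl : DifferentiableAt ℝ p_l θ)
    (hwpos : 0 < p_w θ) (hlpos : 0 < p_l θ)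
    (β η r : ℝ) (hβ : 0 < β) (hη : 0 < η)
    (σ : ℝ → ℝ) (hσ : ∀ t, σ t = 1 / (1 + Real.exp (-t)))
    (z : ℝ) (hz : z = β * (Real.log (p_w θ) - Real.log (p_l θ) - r))
    (L : E → ℝ)
    (hL : ∀ θ', L θ' = -Real.log (σ (β * (Real.log (p_w θ') - Real.log (p_l θ') - r))))
    (Δθ : E) (hΔθ : Δθ = (-η) • gradient L θ)
    (g_w g_l : E)
    (hgw : g_w = gradient (fun θ' => Real.log (p_w θ')) θ)
    (hgl : g_l = gradient (fun θ' => Real.log (p_l θ')) θ) :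
    ⟪gradient p_l θ, Δθ⟫ =
      η * β * (1 - σ z) * p_l θ * (⟪g_l, g_w⟫ - ‖g_l‖ ^ 2) := by
  have hLfun : L = fun θ' => -Real.log (σ (β * (Real.log (p_w θ') - Real.log (p_l θ') - r))) :=
    funext hL
  -- gradients of log ∘ p
  have hdw : DifferentiableAt ℝ (fun θ' => Real.log (p_w θ')) θ := hw.log hwpos.ne'
  have hdl : DifferentiableAt ℝ (fun θ' => Real.log (p_l θ')) θ := hl.log hlpos.ne'
  have hglw : HasGradientAt (fun θ' => Real.log (p_w θ')) g_w θ := hgw ▸ hdw.hasGradientAt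
  have hgll : HasGradientAt (fun θ' => Real.log (p_l θ')) g_l θ := hgl ▸ hdl.hasGradientAt
  have hfw : HasFDerivAt (fun θ' => Real.log (p_w θ'))
      (InnerProductSpace.toDual ℝ E g_w) θ := hglw.hasFDerivAt
  have hfl : HasFDerivAt (fun θ' => Real.log (p_l θ'))
      (InnerProductSpace.toDual ℝ E g_l) θ := hgll.hasFDerivAt
  -- gradient p_l θ = p_l θ • g_l
  have hpl1 : HasFDerivAt (fun θ' => Real.log (p_l θ'))
      ((p_l θ)⁻¹ • InnerProductSpace.toDual ℝ E (gradient p_l θ)) θ :=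
    (Real.hasDerivAt_log hlpos.ne').comp_hasFDerivAt θ hl.hasGradientAt.hasFDerivAt
  have hpl2 : HasGradientAt (fun θ' => Real.log (p_l θ')) ((p_l θ)⁻¹ • gradient p_l θ) θ := by
    rw [hasGradientAt_iff_hasFDerivAt, map_smul]
    exact hpl1
  have hplgl : gradient p_l θ = p_l θ • g_l := by
    have := hgll.unique hpl2
    rw [this, smul_smul, mul_inv_cancel₀ hlpos.ne', one_smul]
  -- derivative of u
  have hu : HasFDerivAt (fun θ' => β * (Real.log (p_w θ') - Real.log (p_l θ') - r))
      (β • (InnerProductSpace.toDual ℝ E g_w - InnerProductSpace.toDual ℝ E g_l)) θ :=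
    ((hfw.sub hfl).sub_const r).const_mul β
  -- outer derivative
  have hepos : (0:ℝ) < 1 + Real.exp (-z) := by positivity
  have houter : HasDerivAt (fun t => -Real.log (σ t)) (σ z - 1) z := by
    have heq : (fun t => -Real.log (σ t)) = fun t => Real.log (1 + Real.exp (-t)) := by
      funext t
      rw [hσ t, one_div, Real.log_inv, neg_neg]
    rw [heq]
    have hinner : HasDerivAt (fun t : ℝ => 1 + Real.exp (-t)) (-Real.exp (-z)) z := by
      have := ((Real.hasDerivAt_exp (-z)).comp z (hasDerivAt_neg z)).const_add 1
      simpa using this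
    have := hinner.log hepos.ne'
    convert this using 1
    rw [hσ z]
    field_simp
    ring
  -- gradient of L
  have hLf : HasFDerivAt L ((σ z - 1) • (β •
      (InnerProductSpace.toDual ℝ E g_w - InnerProductSpace.toDual ℝ E g_l))) θ := by
    rw [hLfun]
    have h1 := houter
    rw [hz] at h1
    have h2 := h1.comp_hasFDerivAt θ hu
    rw [← hz] at h2
    exact h2
  have hLg : HasGradientAt L ((σ z - 1) • β • (g_w - g_l)) θ := by
    rw [hasGradientAt_iff_hasFDerivAt, map_smul, map_smul, map_sub]
    exact hLf
  have hgradL : gradient L θ = (σ z - 1) • β • (g_w - g_l) := hLg.gradient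
  -- conclude
  rw [hΔθ, hgradL, hplgl]
  rw [real_inner_smul_left, real_inner_smul_right, real_inner_smul_right,
    real_inner_smul_right, inner_sub_right, ← real_inner_self_eq_norm_sq]
  ring
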